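/- For the cubic field F = Q(w) with w^3 - 11w - 11 = 0, the ring of integers of F equals Z[w]. -/

import Mathlib

open Polynomial Algebra

private noncomputable def fZ : ℤ[X] := X^3 - C 11 * X - C 11

private lemma fZ_natDegree : fZ.natDegree = 3 := by unfold fZ; compute_degree!

private lemma fZ_monic : fZ.Monic := by unfold fZ; monicity!

private lemma fZ_coeff : fZ.coeff 0 = -11 ∧ fZ.coeff 1 = -11 ∧ fZ.coeff 2 = 0 := by
  unfold fZ
  simp [coeff_X, coeff_C]

private lemma prime11 : Prime (11 : ℤ) := by norm_num

private lemma fZ_eisenstein : fZ.IsEisensteinAt (Ideal.span {(11:ℤ)}) := by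
  constructor
  · rw [fZ_monic.leadingCoeff, Ideal.mem_span_singleton]
    norm_num
  · intro n hn
    rw [fZ_natDegree] at hn
    interval_cases n <;>
      simp [fZ_coeff.1, fZ_coeff.2.1, fZ_coeff.2.2, Ideal.mem_span_singleton]
  · rw [fZ_coeff.1, Ideal.span_singleton_pow, Ideal.mem_span_singleton]
    norm_num

private lemma fZ_irr : Irreducible fZ :=
  fZ_eisenstein.irreducible
    ((Ideal.span_singleton_prime (by norm_num)).2 prime11)
    fZ_monic.isPrimitive
    (by rw [fZ_natDegree]; norm_num)

private lemma fQ_map : fZ.map (Int.castRingHom ℚ) = X^3 - C 11 * X - C 11 := by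
  unfold fZ
  simp [map_ofNat]

private lemma fQ_irr : Irreducible (X^3 - C 11 * X - C 11 : ℚ[X]) := by
  rw [← fQ_map]
  exact (Polynomial.IsPrimitive.Int.irreducible_iff_irreducible_map_cast fZ_monic.isPrimitive).1 fZ_irr

private lemma zmodLem : ∀ a b c : ZMod 17,
    a^2 + 22*b*c = 0 → 2*a*b + 22*b*c + 11*c^2 = 0 → 2*a*c + b^2 + 11*c^2 = 0 →
    a = 4*c ∧ b = 7*c := by decide

theorem stmt2 (F : Type) [Field F] [NumberField F] (w : F)
    (hw : w ^ 3 - 11 * w - 11 = 0) (hgen : Algebra.adjoin ℚ {w} = ⊤) :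
    ∀ x : F, IsIntegral ℤ x ↔ x ∈ Algebra.adjoin ℤ {w} := by
  have hwZ : IsIntegral ℤ w := by
    refine ⟨X^3 - C 11 * X - C 11, by monicity!, ?_⟩
    simp only [eval₂_sub, eval₂_mul, eval₂_pow, eval₂_X, eval₂_C, map_ofNat, eval₂_ofNat]
    linear_combination hw
  -- easy direction
  have hbak : ∀ x : F, x ∈ Algebra.adjoin ℤ ({w} : Set F) → IsIntegral ℤ x := by
    intro x hx
    have : Algebra.adjoin ℤ ({w} : Set F) ≤ integralClosure ℤ F :=
      Algebra.adjoin_le (Set.singleton_subset_iff.mpr hwZ)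
    exact this hx
  -- minimal polynomials
  have hwQ : IsIntegral ℚ w := IsIntegral.of_finite ℚ w
  have minQ : minpoly ℚ w = X^3 - C 11 * X - C 11 := by
    refine (minpoly.eq_of_irreducible_of_monic fQ_irr ?_ (by monicity!)).symm
    simp only [aeval_def, eval₂_sub, eval₂_mul, eval₂_pow, eval₂_X, eval₂_C, map_ofNat, eval₂_ofNat]
    linear_combination hw
  have minZ : minpoly ℤ w = fZ := by
    have h := minpoly.isIntegrallyClosed_eq_field_fractions ℚ F hwZ
    rw [show algebraMap F F w = w from rfl] at h
    rw [minQ, ← fQ_map] at h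
    exact (Polynomial.map_injective _ (Int.cast_injective)) h.symm
  -- power basis
  let pb : PowerBasis ℚ F :=
    (Algebra.adjoin.powerBasis hwQ).map
      ((Subalgebra.equivOfEq _ ⊤ hgen).trans Subalgebra.topEquiv)
  have hpbgen : pb.gen = w := rfl
  have hdim : pb.dim = 3 := by
    show (minpoly ℚ w).natDegree = 3
    rw [minQ]; compute_degree!
  let B : Module.Basis (Fin 3) ℚ F := pb.basis.reindex (finCongr hdim)
  have hB : ∀ i : Fin 3, B i = w ^ (i : ℕ) := by
    intro i
    rw [Module.Basis.reindex_apply, pb.basis_eq_pow, hpbgen, finCongr_symm_apply, Fin.coe_cast]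
  set E : ℚ → ℚ → ℚ → F := fun a b c =>
    algebraMap ℚ F a + algebraMap ℚ F b * w + algebraMap ℚ F c * w ^ 2 with hE
  have hrepr : ∀ a b c : ℚ, ∀ i : Fin 3, B.repr (E a b c) i = ![a, b, c] i := by
    intro a b c i
    have h0 : E a b c = a • B 0 + b • B 1 + c • B 2 := by
      rw [hB 0, hB 1, hB 2]
      rw [show ((0:Fin 3):ℕ) = 0 from rfl, show ((1:Fin 3):ℕ) = 1 from rfl,
        show ((2:Fin 3):ℕ) = 2 from rfl]
      simp only [hE, Algebra.smul_def]
      ring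
    rw [h0]
    simp only [map_add, map_smul, Module.Basis.repr_self, Finsupp.coe_add, Finsupp.coe_smul,
      Pi.add_apply, Pi.smul_apply, Finsupp.single_apply, smul_eq_mul]
    fin_cases i <;> norm_num [Fin.ext_iff]
  have hmulw : ∀ a b c : ℚ, E a b c * w = E (11*c) (a+11*c) b := by
    intro a b c
    simp only [hE, map_add, map_mul, map_ofNat]
    linear_combination (algebraMap ℚ F c) * hw
  have hmulw2 : ∀ a b c : ℚ, E a b c * w^2 = E (11*b) (11*b+11*c) (a+11*c) := by
    intro a b c
    simp only [hE, map_add, map_mul, map_ofNat]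
    linear_combination (algebraMap ℚ F b + algebraMap ℚ F c * w) * hw
  have hsq : ∀ a b c : ℚ, E a b c * E a b c
      = E (a^2+22*b*c) (2*a*b+22*b*c+11*c^2) (2*a*c+b^2+11*c^2) := by
    intro a b c
    simp only [hE, map_add, map_mul, map_ofNat, map_pow]
    linear_combination (2 * algebraMap ℚ F b * algebraMap ℚ F c + (algebraMap ℚ F c)^2 * w) * hw
  have hM : ∀ a b c : ℚ, Algebra.leftMulMatrix B (E a b c)
      = !![a, 11*c, 11*b; b, a+11*c, 11*b+11*c; c, b, a+11*c] := by
    intro a b c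
    ext i j
    rw [Algebra.leftMulMatrix_eq_repr_mul]
    fin_cases j
    · rw [hB]
      norm_num [mul_one, hrepr]
      fin_cases i <;> norm_num
    · rw [hB]
      norm_num [hmulw, hrepr]
      fin_cases i <;> norm_num
    · rw [hB]
      norm_num [hmulw2, hrepr]
      fin_cases i <;> norm_num
  -- trace and norm formulas
  have htr : ∀ a b c : ℚ, Algebra.trace ℚ F (E a b c) = 3*a + 22*c := by
    intro a b c
    rw [Algebra.trace_eq_matrix_trace B, hM, Matrix.trace_fin_three]
    simp
    ring
  have hnorm : ∀ a b c : ℚ, Algebra.norm ℚ (E a b c)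
      = a^3 + 22*a^2*c + 121*a*c^2 - 11*a*b^2 - 33*a*b*c + 121*c^3 + 11*b^3 - 121*b*c^2 := by
    intro a b c
    rw [Algebra.norm_eq_matrix_det B, hM, Matrix.det_fin_three]
    simp
    ring
  -- powers of w in E form
  have hp0 : (1:F) = E 1 0 0 := by simp [hE]
  have hp1 : w = E 0 1 0 := by simp [hE]
  have hp2 : w^2 = E 0 0 1 := by simp [hE]
  have hp3 : w^3 = E 11 11 0 := by
    simp only [hE, map_ofNat, map_zero]
    linear_combination hw
  have hp4 : w^4 = E 0 11 11 := by
    simp only [hE, map_ofNat, map_zero]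
    linear_combination w * hw
  -- discriminant
  have hdiscr : Algebra.discr ℚ pb.basis = 2057 := by
    have hre : Algebra.discr ℚ (⇑B) = Algebra.discr ℚ ⇑pb.basis := by
      rw [show ⇑B = ⇑pb.basis ∘ ⇑(finCongr hdim).symm from by
        simp [B, Module.Basis.coe_reindex]]
      exact Algebra.discr_reindex ℚ pb.basis (finCongr hdim)
    rw [← hre, Algebra.discr_def]
    have hTM : Algebra.traceMatrix ℚ ⇑B = !![3,0,22; 0,22,33; 22,33,242] := by
      ext i j
      rw [Algebra.traceMatrix_apply, Algebra.traceForm_apply]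
      fin_cases i <;> fin_cases j <;>
        · simp only [hB]
          norm_num [← pow_add]
          first
            | (rw [show (1:F) = E 1 0 0 from hp0, htr]; norm_num)
            | (rw [hp1, htr]; norm_num)
            | (rw [hp2, htr]; norm_num)
            | (rw [hp3, htr]; norm_num)
            | (rw [hp4, htr]; norm_num)
            | (rw [show w*w = w^2 from (sq w).symm, hp2, htr]; norm_num)
            | (rw [show w*w^2 = w^3 from by ring, hp3, htr]; norm_num)
            | (rw [show w^2*w = w^3 from by ring, hp3, htr]; norm_num)
            | (rw [show w^2*w^2 = w^4 from by ring, hp4, htr]; norm_num)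
    rw [hTM, Matrix.det_fin_three]
    simp
    norm_num
  -- E with integer coefficients
  have hEZ : ∀ a b c : ℤ, E a b c = a • (1:F) + b • w + c • w^2 := by
    intro a b c
    simp only [hE, zsmul_eq_mul, eq_ratCast]
    push_cast
    ring
  have hmemE : ∀ a b c : ℤ, E a b c ∈ adjoin ℤ ({w} : Set F) := by
    intro a b c
    rw [hEZ]
    refine add_mem (add_mem (zsmul_mem (one_mem _) a) (zsmul_mem ?_ b)) (zsmul_mem (pow_mem ?_ 2) c)
    · exact subset_adjoin rfl
    · exact subset_adjoin rfl
  have hext : ∀ a b c a' b' c' : ℚ, E a b c = E a' b' c' → a = a' ∧ b = b' ∧ c = c' := by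
    intro a b c a' b' c' h
    refine ⟨?_, ?_, ?_⟩
    · have := congrArg (fun z => B.repr z 0) h
      simpa [hrepr] using this
    · have := congrArg (fun z => B.repr z 1) h
      simpa [hrepr] using this
    · have := congrArg (fun z => B.repr z 2) h
      simpa [hrepr] using this
  have hadjE : ∀ y : F, y ∈ adjoin ℤ ({w} : Set F) → ∃ a b c : ℤ, y = E a b c := by
    intro y hy
    rw [Algebra.adjoin_singleton_eq_range_aeval] at hy
    obtain ⟨P, hP⟩ := hy
    replace hP : aeval w P = y := hP
    have hfw : aeval w fZ = 0 := by
      unfold fZ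
      simp only [map_sub, map_mul, map_pow, aeval_X, aeval_C, map_ofNat, eq_intCast]
      push_cast
      linear_combination hw
    have hmod : aeval w P = aeval w (P %ₘ fZ) := by
      conv_lhs => rw [← modByMonic_add_div P fZ]
      simp [hfw]
    have hdeg : (P %ₘ fZ).natDegree < 3 := by
      have := natDegree_modByMonic_lt P fZ_monic (by
        intro h
        have := fZ_natDegree
        rw [h] at this
        simp at this)
      rwa [fZ_natDegree] at this
    refine ⟨(P %ₘ fZ).coeff 0, (P %ₘ fZ).coeff 1, (P %ₘ fZ).coeff 2, ?_⟩
    rw [← hP, hmod, aeval_eq_sum_range' hdeg]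
    rw [Finset.sum_range_succ, Finset.sum_range_succ, Finset.sum_range_one]
    rw [hEZ]
    simp
  -- scaling lemmas
  have hsmulE : ∀ (n : ℤ) (p q r : ℚ), n • E p q r = E (n*p) (n*q) (n*r) := by
    intro n p q r
    simp only [hE, zsmul_eq_mul, eq_ratCast]
    push_cast
    ring
  -- separability instance
  have hsep : Algebra.IsSeparable ℚ F := inferInstance
  -- the chain : for z integral, 17 • z ∈ adjoin
  have hchain : ∀ z : F, IsIntegral ℤ z → (17:ℤ) • z ∈ adjoin ℤ ({w} : Set F) := by
    intro z hz
    have hd : Algebra.discr ℚ pb.basis • z ∈ adjoin ℤ ({pb.gen} : Set F) :=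
      Algebra.discr_mul_isIntegral_mem_adjoin (R := ℤ) (K := ℚ) (hpbgen ▸ hwZ) hz
    rw [hdiscr, hpbgen] at hd
    have h2 : ((11:ℤ)^2) • ((17:ℤ) • z) ∈ adjoin ℤ ({w} : Set F) := by
      have heq : (2057 : ℚ) • z = ((11:ℤ)^2) • ((17:ℤ) • z) := by
        rw [← mul_smul, show (11:ℤ)^2 * 17 = 2057 from rfl,
          show (2057:ℚ) = ((2057:ℤ):ℚ) from by norm_num, Int.cast_smul_eq_zsmul]
      rwa [heq] at hd
    have hei : (minpoly ℤ pb.gen).IsEisensteinAt (Ideal.span {(11:ℤ)}) := by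
      rw [hpbgen, minZ]
      exact fZ_eisenstein
    have := mem_adjoin_of_smul_prime_pow_smul_of_minpoly_isEisensteinAt
      (n := 2) prime11 (hpbgen ▸ hwZ) (hz.zsmul 17) (by rwa [hpbgen]) hei
    rwa [hpbgen] at this
  intro x
  refine ⟨fun hx => ?_, hbak x⟩
  obtain ⟨a, b, c, hab⟩ := hadjE _ (hchain x hx)
  obtain ⟨A, B', C', hAB⟩ := hadjE _ (hchain (x*x) (hx.mul hx))
  -- squared relation
  have hsqrel : E ((a:ℚ)^2+22*b*c) (2*a*b+22*b*c+11*c^2) (2*a*c+(b:ℚ)^2+11*c^2)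
      = E (17*A) (17*B') (17*C') := by
    calc E ((a:ℚ)^2+22*b*c) (2*a*b+22*b*c+11*c^2) (2*a*c+(b:ℚ)^2+11*c^2)
        = E a b c * E a b c := (hsq a b c).symm
      _ = ((17:ℤ)•x) * ((17:ℤ)•x) := by rw [hab]
      _ = (17:ℤ) • ((17:ℤ) • (x*x)) := by
          rw [smul_mul_smul_comm, smul_smul]
      _ = (17:ℤ) • E A B' C' := by rw [hAB]
      _ = E (17*A) (17*B') (17*C') := by rw [hsmulE]; norm_cast
  obtain ⟨he1, he2, he3⟩ := hext _ _ _ _ _ _ hsqrel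
  have e1 : a^2 + 22*b*c = 17*A := by exact_mod_cast he1
  have e2 : 2*a*b + 22*b*c + 11*c^2 = 17*B' := by exact_mod_cast he2
  have e3 : 2*a*c + b^2 + 11*c^2 = 17*C' := by exact_mod_cast he3
  -- congruences mod 17
  have hcong := zmodLem (a : ZMod 17) (b : ZMod 17) (c : ZMod 17)
    (by have := congrArg (Int.cast : ℤ → ZMod 17) e1; push_cast at this
        rw [this, show ((17:ZMod 17)) = 0 from by decide]; ring)
    (by have := congrArg (Int.cast : ℤ → ZMod 17) e2; push_cast at this
        rw [this, show ((17:ZMod 17)) = 0 from by decide]; ring)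
    (by have := congrArg (Int.cast : ℤ → ZMod 17) e3; push_cast at this
        rw [this, show ((17:ZMod 17)) = 0 from by decide]; ring)
  obtain ⟨a', ha'⟩ : (17:ℤ) ∣ a - 4*c := by
    have h0 : ((a - 4*c : ℤ) : ZMod 17) = 0 := by
      push_cast
      rw [hcong.1]
      ring
    exact_mod_cast (ZMod.intCast_zmod_eq_zero_iff_dvd _ 17).mp h0
  obtain ⟨b', hb'⟩ : (17:ℤ) ∣ b - 7*c := by
    have h0 : ((b - 7*c : ℤ) : ZMod 17) = 0 := by
      push_cast
      rw [hcong.2]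
      ring
    exact_mod_cast (ZMod.intCast_zmod_eq_zero_iff_dvd _ 17).mp h0
  -- the auxiliary integral element
  set s : F := E ((a' - c : ℤ)) ((b' + c : ℤ)) 0 with hs
  have hsmem : s ∈ adjoin ℤ ({w} : Set F) := by
    rw [hs, show ((0:ℚ)) = ((0:ℤ):ℚ) from by norm_num]
    exact hmemE _ _ _
  set t : F := x - s with ht
  have htint : IsIntegral ℤ t := hx.sub (hbak s hsmem)
  have h17t : (17:ℤ) • t = E (21*(c:ℚ)) (-10*c) c := by
    rw [ht, smul_sub, hab, hs, hsmulE]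
    have hE1 : (a:ℚ) = 4*c + 17*a' := by
      have : (a:ℚ) - 4*c = 17*a' := by exact_mod_cast ha'
      linarith
    have hE2 : (b:ℚ) = 7*c + 17*b' := by
      have : (b:ℚ) - 7*c = 17*b' := by exact_mod_cast hb'
      linarith
    simp only [hE, eq_ratCast]
    rw [hE1, hE2]
    push_cast
    ring
  -- norm computation
  obtain ⟨m, hm⟩ := IsIntegrallyClosed.isIntegral_iff.mp
    (Algebra.isIntegral_norm (R := ℤ) ℚ htint)
  have hNa : Algebra.norm ℚ ((17:ℤ) • t) = -4335 * (c:ℚ)^3 := by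
    rw [h17t, hnorm]
    ring
  have hNb : Algebra.norm ℚ ((17:ℤ) • t) = 4913 * (m:ℚ) := by
    have h17E : (17:ℤ) • t = E 17 0 0 * t := by
      simp only [hE, zsmul_eq_mul, eq_ratCast]
      push_cast
      ring
    rw [h17E, map_mul, hnorm]
    rw [show Algebra.norm ℚ t = algebraMap ℤ ℚ m from hm.symm, eq_intCast]
    ring
  have hint : 4913 * m = -4335 * c^3 := by
    have : (4913 * (m:ℚ)) = -4335 * (c:ℚ)^3 := by rw [← hNb, hNa]
    exact_mod_cast this
  have hc : (17:ℤ) ∣ c := by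
    have h17m : 17 * m = -15 * c^3 := by
      have h289 : (289:ℤ) * (17 * m) = 289 * (-15 * c^3) := by linarith
      exact mul_left_cancel₀ (by norm_num : (289:ℤ) ≠ 0) h289
    have hdvd : (17:ℤ) ∣ 15 * c^3 := ⟨-m, by linarith⟩
    have hp17 : Prime (17:ℤ) := by norm_num
    rcases hp17.dvd_mul.mp hdvd with h | h
    · norm_num at h
    · exact hp17.dvd_of_dvd_pow h
  obtain ⟨c0, rfl⟩ := hc
  obtain ⟨a0, rfl⟩ : (17:ℤ) ∣ a := ⟨a' + 4*c0, by linarith⟩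
  obtain ⟨b0, rfl⟩ : (17:ℤ) ∣ b := ⟨b' + 7*c0, by linarith⟩
  -- conclude
  have hxE : x = E a0 b0 c0 := by
    have h17 : (17:ℤ) • x = (17:ℤ) • E a0 b0 c0 := by
      rw [hab, hsmulE]
      push_cast
      norm_num
    exact smul_right_injective F (by norm_num : (17:ℤ) ≠ 0) h17
  rw [hxE]
  exact hmemE _ _ _
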